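/- arXiv:1105.5620 — 2 statements merged into one kernel-verified Lean document; each statement's English description precedes it below -/
import Mathlib

section
/- Let f : ℝ → ℂ be 2π-periodic and Lebesgue integrable on [−π, π], and let g : ℝ → ℂ be 2π-periodic with bounded variation. Then the convolution f∗g(x) = ∫_{−π}^{π} f(x − t) g(t) dt is a continuous 2π-periodic function of x and satisfies ‖f∗g‖_∞ ≤ ‖f‖_T · ‖g‖_BV, i.e. sup_{x∈ℝ} |f∗g(x)| ≤ ‖f‖_T (sup_ℝ |g| + V g). -/
open MeasureTheory Real

/-- The Alexiewicz norm of a `2π`-periodic function. -/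
noncomputable def alexNorm (f : ℝ → ℂ) : ℝ :=
  sSup {r : ℝ | ∃ α β : ℝ, α ≤ β ∧ β ≤ α + 2 * π ∧
    r = ‖∫ t in α..β, f t‖}

/-- The variation of a `2π`-periodic function over a period. -/
noncomputable def periodVariation (g : ℝ → ℂ) : ENNReal :=
  ⨆ a : ℝ, eVariationOn g (Set.Icc a (a + 2 * π))

/-- Convolution on the torus. -/
noncomputable def torusConv (f g : ℝ → ℂ) (x : ℝ) : ℂ :=
  ∫ t in (-π)..π, f (x - t) * g t

section ConvBVAux

open Filter Topology

namespace ConvBV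

variable {f g : ℝ → ℂ}

lemma intInt_all (hfper : Function.Periodic f (2 * π))
    (hfint : IntervalIntegrable f volume (-π) π) :
    ∀ a b : ℝ, IntervalIntegrable f volume a b := by
  have block : ∀ k : ℤ, IntervalIntegrable f volume (-π + k * (2*π)) (π + k * (2*π)) := by
    intro k
    have h1 := hfint.comp_add_right (-(k * (2*π)))
    have h2 : (fun x => f (x + -(k * (2*π)))) = f := by
      funext x
      rw [← sub_eq_add_neg]
      exact hfper.sub_int_mul_eq k
    rw [h2] at h1
    simpa [sub_neg_eq_add] using h1
  have big : ∀ n : ℕ, IntervalIntegrable f volume (-π - n * (2*π)) (π + n * (2*π)) := by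
    intro n
    induction n with
    | zero => simpa using hfint
    | succ n ih =>
      have hl := block (-(n+1) : ℤ)
      have hr := block ((n+1) : ℤ)
      have e1 : (-π + ((-(n+1) : ℤ) : ℝ) * (2*π) : ℝ) = -π - ((n:ℝ)+1) * (2*π) := by
        push_cast; ring
      have e2 : (π + ((-(n+1) : ℤ) : ℝ) * (2*π) : ℝ) = -π - (n:ℝ) * (2*π) := by
        push_cast; ring
      have e3 : (-π + (((n+1) : ℤ) : ℝ) * (2*π) : ℝ) = π + (n:ℝ) * (2*π) := by
        push_cast; ring
      have e4 : (π + (((n+1) : ℤ) : ℝ) * (2*π) : ℝ) = π + ((n:ℝ)+1) * (2*π) := by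
        push_cast; ring
      rw [e1, e2] at hl
      rw [e3, e4] at hr
      have := (hl.trans ih).trans hr
      simpa [Nat.cast_succ] using this
  intro a b
  obtain ⟨n, hn⟩ := exists_nat_ge (|a| + |b|)
  refine (big n).mono_set ?_
  have h2π : (1:ℝ) ≤ 2*π := by nlinarith [pi_gt_three]
  have hπ : (0:ℝ) < π := pi_pos
  have hle : -π - n * (2*π) ≤ π + n * (2*π) := by nlinarith
  rw [Set.uIcc_of_le hle]
  have key : ∀ x : ℝ, |x| ≤ (n:ℝ) → x ∈ Set.Icc (-π - n * (2*π)) (π + n * (2*π)) := by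
    intro x hx
    rw [abs_le] at hx
    constructor <;> nlinarith [hx.1, hx.2]
  have ha : a ∈ Set.Icc (-π - n * (2*π)) (π + n * (2*π)) :=
    key a (le_trans (by nlinarith [abs_nonneg b] : |a| ≤ |a| + |b|) hn)
  have hb : b ∈ Set.Icc (-π - n * (2*π)) (π + n * (2*π)) :=
    key b (le_trans (by nlinarith [abs_nonneg a] : |b| ≤ |a| + |b|) hn)
  exact Set.uIcc_subset_Icc ha hb

lemma alexSet_bddAbove (hfper : Function.Periodic f (2 * π))
    (hall : ∀ a b : ℝ, IntervalIntegrable f volume a b) :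
    BddAbove {r : ℝ | ∃ α β : ℝ, α ≤ β ∧ β ≤ α + 2 * π ∧
      r = ‖∫ t in α..β, f t‖} := by
  refine ⟨∫ t in (-π)..(3*π), ‖f t‖, ?_⟩
  rintro r ⟨α, β, hab, hba, rfl⟩
  have h2π : (0:ℝ) < 2*π := by positivity
  set k : ℤ := ⌈(α - π) / (2*π)⌉ with hk
  have hk1 : (α - π)/(2*π) ≤ k := Int.le_ceil _
  have hk2 : ((k:ℝ)) < (α - π)/(2*π) + 1 := Int.ceil_lt_add_one _
  have e1 : α - π ≤ k * (2*π) := (div_le_iff₀ h2π).mp hk1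
  have e2 : (k:ℝ)*(2*π) < (α - π) + 2*π := by
    have h := mul_lt_mul_of_pos_right hk2 h2π
    rw [add_mul, one_mul, div_mul_cancel₀ _ (ne_of_gt h2π)] at h
    exact h
  set α' := α - k*(2*π) with hα'
  set β' := β - k*(2*π) with hβ'
  have hα'1 : -π < α' := by simp only [hα']; nlinarith
  have hα'2 : α' ≤ π := by simp only [hα']; nlinarith
  have hab' : α' ≤ β' := by simp only [hα', hβ']; linarith
  have hβ'2 : β' ≤ 3*π := by simp only [hα', hβ'] at *; nlinarith
  have key : (∫ t in α..β, f t) = ∫ t in α'..β', f t := by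
    have := intervalIntegral.integral_comp_add_right (a := α') (b := β') f ((k:ℝ)*(2*π))
    have hfe : (fun x => f (x + (k:ℝ)*(2*π))) = f := funext fun x => (hfper.int_mul k) x
    rw [hfe] at this
    have e3 : α' + (k:ℝ)*(2*π) = α := by simp [hα']
    have e4 : β' + (k:ℝ)*(2*π) = β := by simp [hβ']
    rw [e3, e4] at this
    exact this.symm
  rw [key]
  calc ‖∫ t in α'..β', f t‖ ≤ ∫ t in α'..β', ‖f t‖ :=
        intervalIntegral.norm_integral_le_integral_norm hab'
    _ ≤ ∫ t in (-π)..(3*π), ‖f t‖ := by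
        apply intervalIntegral.integral_mono_interval (le_of_lt hα'1) hab' hβ'2
        · filter_upwards with t using norm_nonneg _
        · exact (hall (-π) (3*π)).norm

lemma alexNorm_nonneg' (hfper : Function.Periodic f (2 * π))
    (hall : ∀ a b : ℝ, IntervalIntegrable f volume a b) : 0 ≤ alexNorm f := by
  apply le_csSup (alexSet_bddAbove hfper hall)
  exact ⟨0, 0, le_refl _, by positivity, by simp⟩

lemma abs_integral_le_alexNorm (hfper : Function.Periodic f (2 * π))
    (hall : ∀ a b : ℝ, IntervalIntegrable f volume a b) {a b : ℝ}
    (h1 : a ≤ b) (h2 : b ≤ a + 2*π) :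
    ‖∫ t in a..b, f t‖ ≤ alexNorm f :=
  le_csSup (alexSet_bddAbove hfper hall) ⟨a, b, h1, h2, rfl⟩

lemma evar_Icc_ne_top (hgbv : periodVariation g ≠ ⊤) :
    ∀ a b : ℝ, eVariationOn g (Set.Icc a b) ≠ ⊤ := by
  have h2π : (0:ℝ) < 2*π := by positivity
  have hper : ∀ a : ℝ, eVariationOn g (Set.Icc a (a + 2*π)) ≠ ⊤ := fun a =>
    ne_top_of_le_ne_top hgbv (le_iSup (fun a => eVariationOn g (Set.Icc a (a + 2*π))) a)
  have hn : ∀ (a : ℝ) (n : ℕ), eVariationOn g (Set.Icc a (a + n*(2*π))) ≠ ⊤ := by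
    intro a n
    induction n with
    | zero =>
      simp only [Nat.cast_zero, zero_mul, add_zero, Set.Icc_self]
      refine ne_top_of_le_ne_top (hper a) (eVariationOn.mono g ?_)
      intro x hx
      simp only [Set.mem_singleton_iff] at hx
      subst hx
      exact Set.left_mem_Icc.mpr (by linarith)
    | succ n ih =>
      have h1 : a ≤ a + n*(2*π) := by nlinarith [Nat.cast_nonneg (α := ℝ) n]
      have h2 : a + n*(2*π) ≤ a + (n+1 : ℕ)*(2*π) := by push_cast; nlinarith
      have key := eVariationOn.Icc_add_Icc g (s := Set.univ) h1 h2 (Set.mem_univ _)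
      simp only [Set.univ_inter] at key
      rw [← key]
      have h3 : eVariationOn g (Set.Icc (a + n*(2*π)) (a + (n+1:ℕ)*(2*π))) ≠ ⊤ := by
        have e : a + ((n+1:ℕ):ℝ)*(2*π) = (a + n*(2*π)) + 2*π := by push_cast; ring
        rw [e]
        exact hper _
      exact ENNReal.add_ne_top.mpr ⟨ih, h3⟩
  intro a b
  obtain ⟨n, hnn⟩ := exists_nat_ge ((b - a)/(2*π))
  refine ne_top_of_le_ne_top (hn a n) (eVariationOn.mono g ?_)
  intro x hx
  rcases hx with ⟨h1, h2⟩
  constructor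
  · exact h1
  · have : b - a ≤ n * (2*π) := by
      rw [div_le_iff₀ h2π] at hnn; linarith
    linarith

lemma g_locBV (hgbv : periodVariation g ≠ ⊤) : LocallyBoundedVariationOn g Set.univ := by
  intro a b _ _
  rw [Set.univ_inter]
  exact evar_Icc_ne_top hgbv a b

lemma g_meas (hgbv : periodVariation g ≠ ⊤) : Measurable g := by
  have hloc := g_locBV hgbv
  have hre : LocallyBoundedVariationOn (Complex.reCLM ∘ g) Set.univ :=
    Complex.reCLM.lipschitz.comp_locallyBoundedVariationOn hloc
  have him : LocallyBoundedVariationOn (Complex.imCLM ∘ g) Set.univ :=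
    Complex.imCLM.lipschitz.comp_locallyBoundedVariationOn hloc
  obtain ⟨p, q, hp, hq, hpq⟩ := hre.exists_monotoneOn_sub_monotoneOn
  obtain ⟨p', q', hp', hq', hpq'⟩ := him.exists_monotoneOn_sub_monotoneOn
  rw [monotoneOn_univ] at hp hq hp' hq'
  have hremeas : Measurable fun t => (g t).re := by
    have : (fun t => (g t).re) = p - q := hpq
    rw [this]; exact (hp.measurable).sub hq.measurable
  have himmeas : Measurable fun t => (g t).im := by
    have : (fun t => (g t).im) = p' - q' := hpq'
    rw [this]; exact (hp'.measurable).sub hq'.measurable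
  have : g = fun t => ((g t).re : ℂ) + ((g t).im : ℂ) * Complex.I := by
    funext t; exact (Complex.re_add_im (g t)).symm
  rw [this]
  exact ((Complex.measurable_ofReal.comp hremeas).add
    ((Complex.measurable_ofReal.comp himmeas).mul_const _))

lemma g_ae_cont (hgbv : periodVariation g ≠ ⊤) : ∀ᵐ t : ℝ, ContinuousAt g t := by
  have key : ∀ n : ℕ, ∀ᵐ t : ℝ,
      t ∈ Set.Ioo (-(n:ℝ)-1) ((n:ℝ)+1) → ContinuousAt g t := by
    intro n
    have hbv : LocallyBoundedVariationOn g (Set.Icc (-(n:ℝ)-1) ((n:ℝ)+1)) :=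
      BoundedVariationOn.locallyBoundedVariationOn (evar_Icc_ne_top hgbv _ _)
    filter_upwards [hbv.ae_differentiableWithinAt_of_mem] with t ht hto
    have htm : t ∈ Set.Icc (-(n:ℝ)-1) ((n:ℝ)+1) := Set.Ioo_subset_Icc_self hto
    have hdiff := ht htm
    exact hdiff.continuousWithinAt.continuousAt (Icc_mem_nhds hto.1 hto.2)
  filter_upwards [MeasureTheory.ae_all_iff.mpr key] with t ht
  obtain ⟨n, hnt⟩ := exists_nat_gt |t|
  have := abs_lt.mp hnt
  exact ht n ⟨by linarith [this.1], by linarith [this.2]⟩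

lemma g_bddAbove (hgper : Function.Periodic g (2 * π)) (hgbv : periodVariation g ≠ ⊤) :
    BddAbove (Set.range fun t => ‖g t‖) := by
  have h2π : (0:ℝ) < 2*π := by positivity
  refine ⟨‖g (-π)‖ + (eVariationOn g (Set.Icc (-π) π)).toReal, ?_⟩
  rintro r ⟨t, rfl⟩
  set k : ℤ := ⌈(t - π) / (2*π)⌉ with hk
  have hk1 : (t - π)/(2*π) ≤ k := Int.le_ceil _
  have hk2 : ((k:ℝ)) < (t - π)/(2*π) + 1 := Int.ceil_lt_add_one _
  have e1 : t - π ≤ k * (2*π) := (div_le_iff₀ h2π).mp hk1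
  have e2 : (k:ℝ)*(2*π) < (t - π) + 2*π := by
    have h := mul_lt_mul_of_pos_right hk2 h2π
    rw [add_mul, one_mul, div_mul_cancel₀ _ (ne_of_gt h2π)] at h
    exact h
  set t' := t - k*(2*π) with ht'
  have htm : t' ∈ Set.Icc (-π) π := ⟨by simp only [ht']; nlinarith, by simp only [ht']; nlinarith⟩
  have hgt : g t' = g t := hgper.sub_int_mul_eq k
  have hedist : edist (g t') (g (-π)) ≤ eVariationOn g (Set.Icc (-π) π) :=
    eVariationOn.edist_le g htm (Set.left_mem_Icc.mpr (by linarith [pi_pos]))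
  have hfin : eVariationOn g (Set.Icc (-π) π) ≠ ⊤ := evar_Icc_ne_top hgbv _ _
  have hdist : dist (g t') (g (-π)) ≤ (eVariationOn g (Set.Icc (-π) π)).toReal := by
    rw [dist_edist]
    exact ENNReal.toReal_mono hfin hedist
  calc ‖g t‖ = ‖g t'‖ := by rw [hgt]
    _ ≤ ‖g (-π)‖ + dist (g t') (g (-π)) := by
        rw [Complex.dist_eq]
        calc ‖g t'‖ = ‖g (-π) + (g t' - g (-π))‖ := by ring_nf
          _ ≤ ‖g (-π)‖ + ‖g t' - g (-π)‖ := norm_add_le _ _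
    _ ≤ _ := by linarith

lemma mul_bdd_intInt {F G : ℝ → ℂ} {a b : ℝ} (hF : IntervalIntegrable F volume a b)
    (hG : AEStronglyMeasurable G (volume.restrict (Set.uIoc a b)))
    {C : ℝ} (hC : ∀ t, ‖G t‖ ≤ C) :
    IntervalIntegrable (fun t => F t * G t) volume a b := by
  rw [intervalIntegrable_iff] at hF ⊢
  have h := hF.bdd_mul hG (Filter.Eventually.of_forall hC)
  have e : (fun t => F t * G t) = fun t => G t * F t := by funext t; ring
  rw [e]; exact h

/-- The mesh of the `n`-th grid. -/
noncomputable def msh (n : ℕ) : ℝ := 2 * π / (n + 1)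

/-- Grid points. -/
noncomputable def pt (n i : ℕ) : ℝ := -π + i * msh n

/-- Round up to the next grid point. -/
noncomputable def rnd (n : ℕ) (t : ℝ) : ℝ := -π + ⌈(t + π) / msh n⌉ * msh n

lemma msh_pos (n : ℕ) : 0 < msh n := by
  have : (0:ℝ) < (n:ℝ) + 1 := by positivity
  exact div_pos (by positivity) this

lemma pt_zero (n : ℕ) : pt n 0 = -π := by simp [pt]

lemma pt_last (n : ℕ) : pt n (n + 1) = π := by
  have h : ((n:ℝ) + 1) ≠ 0 := by positivity
  simp only [pt, msh]
  push_cast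
  field_simp
  ring

lemma pt_mono (n : ℕ) : Monotone (pt n) := fun i j hij => by
  simp only [pt]
  have := (msh_pos n).le
  have : (i:ℝ) ≤ j := Nat.cast_le.mpr hij
  nlinarith [msh_pos n]

lemma pt_mem (n : ℕ) {i : ℕ} (hi : i ≤ n + 1) : pt n i ∈ Set.Icc (-π) π := by
  constructor
  · rw [← pt_zero n]; exact pt_mono n (Nat.zero_le i)
  · rw [← pt_last n]; exact pt_mono n hi

lemma rnd_eq {n i : ℕ} {t : ℝ} (ht : t ∈ Set.Ioc (pt n i) (pt n (i + 1))) :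
    rnd n t = pt n (i + 1) := by
  have hδ := msh_pos n
  have h1 : (i:ℝ) * msh n < t + π := by
    have := ht.1; simp only [pt] at this; linarith
  have h2 : t + π ≤ ((i:ℝ) + 1) * msh n := by
    have := ht.2; simp only [pt] at this; push_cast at this; linarith
  have hceil : ⌈(t + π) / msh n⌉ = (i : ℤ) + 1 := by
    rw [Int.ceil_eq_iff]
    constructor
    · rw [lt_div_iff₀ hδ]
      push_cast
      linarith
    · rw [div_le_iff₀ hδ]
      push_cast
      linarith
  simp only [rnd, hceil, pt]
  push_cast
  ring

lemma le_rnd (n : ℕ) (t : ℝ) : t ≤ rnd n t := by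
  have hδ := msh_pos n
  have h := Int.le_ceil ((t + π) / msh n)
  have h2 := mul_le_mul_of_nonneg_right h hδ.le
  rw [div_mul_cancel₀ _ (ne_of_gt hδ)] at h2
  simp only [rnd]
  linarith

lemma rnd_le (n : ℕ) (t : ℝ) : rnd n t ≤ t + msh n := by
  have hδ := msh_pos n
  have h := (Int.ceil_lt_add_one ((t + π) / msh n)).le
  have h2 := mul_le_mul_of_nonneg_right h hδ.le
  rw [add_mul, one_mul, div_mul_cancel₀ _ (ne_of_gt hδ)] at h2
  simp only [rnd]
  linarith

lemma rnd_measurable (n : ℕ) : Measurable (rnd n) := by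
  apply Measurable.const_add
  apply Measurable.mul_const
  exact Measurable.comp (by measurability)
    (Int.measurable_ceil.comp ((measurable_id.add_const π).div_const (msh n)))

lemma msh_tendsto : Tendsto msh atTop (nhds 0) := by
  have : msh = fun n : ℕ => 2 * π / ((n : ℝ) + 1) := rfl
  rw [this]
  apply Tendsto.div_atTop (tendsto_const_nhds (x := 2 * π))
  exact tendsto_atTop_add_const_right _ 1 tendsto_natCast_atTop_atTop

lemma main_bound
    (hall : ∀ a b : ℝ, IntervalIntegrable f volume a b)
    (habs : ∀ a b : ℝ, a ≤ b → b ≤ a + 2*π →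
      ‖∫ t in a..b, f t‖ ≤ alexNorm f)
    (hgmeas : Measurable g)
    (hgaec : ∀ᵐ t : ℝ, ContinuousAt g t)
    (hgbv : periodVariation g ≠ ⊤)
    {C : ℝ} (hC : ∀ t, ‖g t‖ ≤ C)
    (x : ℝ) :
    ‖torusConv f g x‖ ≤ alexNorm f * (C + (periodVariation g).toReal) := by
  have hππ : (-π : ℝ) ≤ π := by linarith [pi_pos]
  set K := alexNorm f with hKdef
  set V := (periodVariation g).toReal with hVdef
  set Fx : ℝ → ℂ := fun t => f (x - t) with hFxdef
  have hFxint : ∀ a b : ℝ, IntervalIntegrable Fx volume a b := by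
    intro a b
    have := (hall (x - a) (x - b)).comp_sub_left x enorm_ne_top
    simpa using this
  have hC0 : 0 ≤ C := le_trans (norm_nonneg _) (hC 0)
  have hK0 : 0 ≤ K := le_trans (norm_nonneg _) (habs 0 0 le_rfl (by positivity))
  have hHabs : ∀ a b : ℝ, a ≤ b → b ≤ a + 2*π →
      ‖∫ t in a..b, Fx t‖ ≤ K := by
    intro a b h1 h2
    have e : (∫ t in a..b, Fx t) = ∫ u in (x - b)..(x - a), f u :=
      intervalIntegral.integral_comp_sub_left f x
    rw [e]
    exact habs (x - b) (x - a) (by linarith) (by linarith)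
  set H : ℕ → ℕ → ℂ := fun n i => ∫ t in (-π)..(pt n i), Fx t with hHdef
  set G : ℕ → ℕ → ℂ := fun n i => g (pt n i) with hGdef
  set S : ℕ → ℂ := fun n =>
    ∑ i ∈ Finset.range (n + 1), (H n (i+1) - H n i) * G n (i+1) with hSdef
  have hHbd : ∀ n i, i ≤ n + 1 → ‖H n i‖ ≤ K := by
    intro n i hi
    have hm := pt_mem n hi
    exact hHabs (-π) (pt n i) hm.1 (by linarith [hm.2, pi_pos])
  have hH0 : ∀ n, H n 0 = 0 := by
    intro n
    simp [hHdef, pt_zero, intervalIntegral.integral_same]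
  have hSbd : ∀ n, ‖S n‖ ≤ K * (C + V) := by
    intro n
    set T : ℂ := ∑ i ∈ Finset.range (n + 1), H n i * (G n (i+1) - G n i) with hTdef
    have tele : S n + T = H n (n+1) * G n (n+1) - H n 0 * G n 0 := by
      rw [hSdef, hTdef, ← Finset.sum_add_distrib]
      have hc : ∀ i ∈ Finset.range (n+1),
          (H n (i+1) - H n i) * G n (i+1) + H n i * (G n (i+1) - G n i)
            = H n (i+1) * G n (i+1) - H n i * G n i := fun i _ => by ring
      rw [Finset.sum_congr rfl hc]
      exact Finset.sum_range_sub (fun i => H n i * G n i) (n+1)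
    have hΔ : ∑ i ∈ Finset.range (n+1), ‖G n (i+1) - G n i‖ ≤ V := by
      have hu : Monotone fun j => pt n (min j (n+1)) :=
        fun a b hab => pt_mono n (min_le_min_right _ hab)
      have hus : ∀ j, pt n (min j (n+1)) ∈ Set.Icc (-π) π :=
        fun j => pt_mem n (min_le_right _ _)
      have hsum := eVariationOn.sum_le (f := g) (n := n+1) hu hus
      have hterm : ∀ i ∈ Finset.range (n+1),
          edist (g (pt n (min (i+1) (n+1)))) (g (pt n (min i (n+1))))
            = edist (G n (i+1)) (G n i) := by
        intro i hi
        rw [Finset.mem_range] at hi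
        rw [min_eq_left (by omega), min_eq_left (by omega)]
      rw [Finset.sum_congr rfl hterm] at hsum
      have hVle : eVariationOn g (Set.Icc (-π) π) ≤ periodVariation g := by
        have := le_iSup (fun a => eVariationOn g (Set.Icc a (a + 2*π))) (-π)
        simpa [periodVariation, show -π + 2*π = π by ring] using this
      have hsum2 := le_trans hsum hVle
      calc ∑ i ∈ Finset.range (n+1), ‖G n (i+1) - G n i‖
          = ∑ i ∈ Finset.range (n+1), (edist (G n (i+1)) (G n i)).toReal := by
            refine Finset.sum_congr rfl fun i _ => ?_
            rw [← Complex.dist_eq, dist_edist]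
        _ = (∑ i ∈ Finset.range (n+1), edist (G n (i+1)) (G n i)).toReal :=
            (ENNReal.toReal_sum fun i _ => edist_ne_top _ _).symm
        _ ≤ V := ENNReal.toReal_mono hgbv hsum2
    have hTbd : ‖T‖ ≤ K * V := by
      calc ‖T‖
          ≤ ∑ i ∈ Finset.range (n+1), ‖H n i * (G n (i+1) - G n i)‖ :=
            norm_sum_le _ _
        _ = ∑ i ∈ Finset.range (n+1),
              ‖H n i‖ * ‖G n (i+1) - G n i‖ := by
            simp [norm_mul]
        _ ≤ ∑ i ∈ Finset.range (n+1), K * ‖G n (i+1) - G n i‖ := by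
            refine Finset.sum_le_sum fun i hi => ?_
            rw [Finset.mem_range] at hi
            exact mul_le_mul_of_nonneg_right (hHbd n i (by omega)) (norm_nonneg _)
        _ = K * ∑ i ∈ Finset.range (n+1), ‖G n (i+1) - G n i‖ :=
            (Finset.mul_sum _ _ _).symm
        _ ≤ K * V := mul_le_mul_of_nonneg_left hΔ hK0
    have hSeq : S n = H n (n+1) * G n (n+1) - T := by
      have := tele
      rw [hH0 n] at this
      rw [zero_mul, sub_zero] at this
      linear_combination this
    have h1 : ‖S n‖ ≤ ‖H n (n+1) * G n (n+1)‖ + ‖T‖ := by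
      rw [hSeq]
      exact norm_sub_le _ _
    have h2 : ‖H n (n+1) * G n (n+1)‖ ≤ K * C := by
      rw [norm_mul]
      exact mul_le_mul (hHbd n (n+1) le_rfl) (hC _) (norm_nonneg _) hK0
    calc ‖S n‖ ≤ K * C + K * V := by linarith
      _ = K * (C + V) := by ring
  have hSint : ∀ n, S n = ∫ t in (-π)..π, Fx t * g (rnd n t) := by
    intro n
    have hC' : ∀ t, ‖g (rnd n t)‖ ≤ C := fun t => by
      exact hC _
    have hint : ∀ i, i < n+1 →
        IntervalIntegrable (fun t => Fx t * g (rnd n t)) volume (pt n i) (pt n (i+1)) :=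
      fun i _ => mul_bdd_intInt (hFxint _ _)
        (((hgmeas.comp (rnd_measurable n)).aestronglyMeasurable).restrict) hC'
    have hsum := intervalIntegral.sum_integral_adjacent_intervals hint
    rw [pt_zero, pt_last] at hsum
    rw [← hsum, hSdef]
    refine Finset.sum_congr rfl fun i hi => ?_
    have hle : pt n i ≤ pt n (i+1) := pt_mono n (Nat.le_succ i)
    have heq : Set.EqOn (fun t => Fx t * g (rnd n t)) (fun t => Fx t * g (pt n (i+1)))
        (Set.Ioc (pt n i) (pt n (i+1))) := fun t ht => by
      simp only
      rw [rnd_eq ht]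
    have hpiece : (∫ t in (pt n i)..(pt n (i+1)), Fx t) = H n (i+1) - H n i := by
      have hadd := intervalIntegral.integral_add_adjacent_intervals
        (hFxint (-π) (pt n i)) (hFxint (pt n i) (pt n (i+1)))
      rw [hHdef]
      simp only
      linear_combination hadd
    rw [intervalIntegral.integral_of_le hle, setIntegral_congr_fun measurableSet_Ioc heq,
      integral_mul_const, ← intervalIntegral.integral_of_le hle, hpiece]
  have hconv : Tendsto (fun n => ∫ t in (-π)..π, Fx t * g (rnd n t)) atTop
      (𝓝 (torusConv f g x)) := by
    have htc : torusConv f g x = ∫ t in (-π)..π, Fx t * g t := rfl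
    rw [htc]
    apply intervalIntegral.tendsto_integral_filter_of_dominated_convergence
      (fun t => ‖Fx t‖ * C)
    · refine Eventually.of_forall fun n => ?_
      exact ((intervalIntegrable_iff.mp (hFxint (-π) π)).aestronglyMeasurable).mul
        (((hgmeas.comp (rnd_measurable n)).aestronglyMeasurable).restrict)
    · refine Eventually.of_forall fun n => Eventually.of_forall fun t => fun _ => ?_
      rw [norm_mul]
      refine mul_le_mul_of_nonneg_left ?_ (norm_nonneg _)
      exact hC _
    · exact ((hFxint (-π) π).norm).mul_const C
    · filter_upwards [hgaec] with t hct _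
      have hr : Tendsto (fun n => rnd n t) atTop (𝓝 t) := by
        have hup : Tendsto (fun n => t + msh n) atTop (𝓝 t) := by
          simpa using tendsto_const_nhds.add msh_tendsto
        exact tendsto_of_tendsto_of_tendsto_of_le_of_le tendsto_const_nhds hup
          (fun n => le_rnd n t) (fun n => rnd_le n t)
      exact tendsto_const_nhds.mul (hct.tendsto.comp hr)
  have h1 : Tendsto (fun n => ‖∫ t in (-π)..π, Fx t * g (rnd n t)‖) atTop
      (𝓝 (‖torusConv f g x‖)) :=
    (continuous_norm.continuousAt.tendsto.comp hconv)
  apply le_of_tendsto h1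
  filter_upwards with n
  rw [← hSint n]
  exact hSbd n

lemma torusConv_periodic (hfper : Function.Periodic f (2*π)) :
    Function.Periodic (torusConv f g) (2*π) := by
  intro x
  unfold torusConv
  refine intervalIntegral.integral_congr fun t _ => ?_
  rw [show x + 2*π - t = (x - t) + 2*π by ring, hfper (x - t)]

lemma torusConv_eq (hfper : Function.Periodic f (2*π)) (hgper : Function.Periodic g (2*π))
    (x : ℝ) : torusConv f g x = ∫ u in (-π)..π, f u * g (x - u) := by
  set φ : ℝ → ℂ := fun u => f u * g (x - u) with hφ
  have hφper : Function.Periodic φ (2*π) := by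
    intro u
    simp only [hφ]
    rw [hfper u, show x - (u + 2*π) = (x - u) - 2*π by ring, hgper.sub_eq (x - u)]
  have key : torusConv f g x = ∫ t in (-π)..π, φ (x - t) := by
    unfold torusConv
    refine intervalIntegral.integral_congr fun t _ => ?_
    simp only [hφ]
    rw [show x - (x - t) = t by ring]
  rw [key, intervalIntegral.integral_comp_sub_left φ x]
  have h := hφper.intervalIntegral_add_eq (x - π) (-π)
  rw [show x - π + 2*π = x + π by ring, show -π + 2*π = π by ring] at h
  rw [show x - -π = x + π by ring]
  exact h

lemma torusConv_continuous
    (hfper : Function.Periodic f (2*π))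
    (hall : ∀ a b : ℝ, IntervalIntegrable f volume a b)
    (hgper : Function.Periodic g (2*π))
    (hgmeas : Measurable g)
    (hgaec : ∀ᵐ t : ℝ, ContinuousAt g t)
    {C : ℝ} (hC : ∀ t, ‖g t‖ ≤ C) :
    Continuous (torusConv f g) := by
  rw [continuous_iff_seqContinuous]
  intro u x hux
  have hrepr : ∀ y : ℝ, torusConv f g y = ∫ t in (-π)..π, f t * g (y - t) :=
    fun y => torusConv_eq hfper hgper y
  have hgoal : Tendsto (fun n => ∫ t in (-π)..π, f t * g (u n - t)) atTop
      (𝓝 (∫ t in (-π)..π, f t * g (x - t))) := by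
    apply intervalIntegral.tendsto_integral_filter_of_dominated_convergence
      (fun t => ‖f t‖ * C)
    · refine Eventually.of_forall fun n => ?_
      exact ((intervalIntegrable_iff.mp (hall (-π) π)).aestronglyMeasurable).mul
        (((hgmeas.comp (measurable_const.sub measurable_id)).aestronglyMeasurable).restrict)
    · refine Eventually.of_forall fun n => Eventually.of_forall fun t => fun _ => ?_
      rw [norm_mul]
      refine mul_le_mul_of_nonneg_left ?_ (norm_nonneg _)
      exact hC _
    · exact ((hall (-π) π).norm).mul_const C
    · have haex : ∀ᵐ t : ℝ, ContinuousAt g (x - t) :=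
        (Measure.measurePreserving_sub_left volume x).quasiMeasurePreserving.ae hgaec
      filter_upwards [haex] with t hct _
      exact tendsto_const_nhds.mul (hct.tendsto.comp ((hux.sub_const t)))
  have e1 : (fun n => torusConv f g (u n)) = fun n => ∫ t in (-π)..π, f t * g (u n - t) := by
    funext n; exact hrepr (u n)
  show Tendsto (fun n => torusConv f g (u n)) atTop (𝓝 (torusConv f g x))
  rw [e1, hrepr x]
  exact hgoal

end ConvBV

end ConvBVAux

/-- For `f` periodic and integrable and `g` periodic of bounded
variation, `f∗g` is continuous and `2π`-periodic with
`‖f∗g‖_∞ ≤ ‖f‖_𝕋 ‖g‖_BV`. -/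
theorem convolution_bv_continuous (f g : ℝ → ℂ)
    (hfper : Function.Periodic f (2 * π))
    (hfint : IntervalIntegrable f volume (-π) π)
    (hgper : Function.Periodic g (2 * π))
    (hgbv : periodVariation g ≠ ⊤) :
    Continuous (torusConv f g)
    ∧ Function.Periodic (torusConv f g) (2 * π)
    ∧ ∀ x : ℝ, ‖torusConv f g x‖
        ≤ alexNorm f * ((⨆ t : ℝ, ‖g t‖) + (periodVariation g).toReal) := by
  have hall := ConvBV.intInt_all hfper hfint
  have hgmeas := ConvBV.g_meas hgbv
  have hgaec := ConvBV.g_ae_cont hgbv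
  have hbdd := ConvBV.g_bddAbove hgper hgbv
  have hCle : ∀ t, ‖g t‖ ≤ ⨆ t : ℝ, ‖g t‖ :=
    fun t => le_ciSup hbdd t
  exact ⟨ConvBV.torusConv_continuous hfper hall hgper hgmeas hgaec hCle,
    ConvBV.torusConv_periodic hfper,
    fun x => ConvBV.main_bound hall
      (fun a b h1 h2 => ConvBV.abs_integral_le_alexNorm hfper hall h1 h2)
      hgmeas hgaec hgbv hCle x⟩
end

section
/- Let f, g : ℝ → ℂ be 2π-periodic and Lebesgue integrable on [−π, π]. Then the convolution f∗g satisfies ‖f∗g‖_T ≤ ‖f‖_T · ‖g‖_1, where ‖g‖_1 = ∫_{−π}^{π} |g(t)| dt. -/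
open MeasureTheory Real

open Set


/-- A periodic function integrable on one period is interval integrable on every interval. -/
lemma periodic_intervalIntegrable_all {f : ℝ → ℂ} {T : ℝ} (hT : 0 < T)
    (hper : Function.Periodic f T) {a₀ : ℝ}
    (hint : IntervalIntegrable f volume a₀ (a₀ + T)) (a b : ℝ) :
    IntervalIntegrable f volume a b := by
  have cell : ∀ n : ℤ, IntegrableOn f (Ioc (a₀ + n • T) (a₀ + (n + 1) • T)) volume := by
    intro n
    have h1 : IntervalIntegrable (fun x => f (x - n • T)) volume
        (a₀ + n • T) (a₀ + T + n • T) := hint.comp_sub_right (n • T)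
    have h2 : (fun x : ℝ => f (x - n • T)) = f := funext fun x => hper.sub_zsmul_eq n
    rw [h2] at h1
    have he : a₀ + (n + 1) • T = a₀ + T + n • T := by
      rw [add_zsmul, one_zsmul]; ring
    rw [he]
    exact h1.1
  suffices key : ∀ a b : ℝ, a ≤ b → IntervalIntegrable f volume a b by
    rcases le_total a b with hab | hab
    · exact key a b hab
    · exact (key b a hab).symm
  intro a b hab
  set m : ℤ := ⌊(a - a₀) / T⌋ - 1 with hm
  set M : ℤ := ⌈(b - a₀) / T⌉ with hM
  have cover : Ioc a b ⊆ ⋃ n ∈ Finset.Icc m M, Ioc (a₀ + n • T) (a₀ + (n + 1) • T) := by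
    intro x hx
    have hmem : x ∈ ⋃ n : ℤ, Ioc (a₀ + n • T) (a₀ + (n + 1) • T) := by
      rw [iUnion_Ioc_add_zsmul hT a₀]; trivial
    obtain ⟨n, hn⟩ := mem_iUnion.1 hmem
    obtain ⟨h1, h2⟩ := hn
    rw [zsmul_eq_mul] at h1
    rw [add_zsmul, one_zsmul, zsmul_eq_mul] at h2
    have hnmem : n ∈ Finset.Icc m M := Finset.mem_Icc.mpr ?_
    · exact mem_biUnion hnmem ⟨by rw [zsmul_eq_mul]; exact h1,
        by rw [add_zsmul, one_zsmul, zsmul_eq_mul]; exact h2⟩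
    constructor
    · -- m ≤ n
      have hle : (a - a₀) / T ≤ (n : ℝ) + 1 := by
        rw [div_le_iff₀ hT]
        have := hx.1
        nlinarith
      have h3 : (⌊(a - a₀) / T⌋ : ℝ) ≤ (n : ℝ) + 1 :=
        le_trans (Int.floor_le _) hle
      have h4 : ⌊(a - a₀) / T⌋ ≤ n + 1 := by exact_mod_cast h3
      omega
    · -- n ≤ M
      have hlt : (n : ℝ) < (b - a₀) / T := by
        rw [lt_div_iff₀ hT]
        have := hx.2
        nlinarith
      have h3 : (n : ℝ) < (⌈(b - a₀) / T⌉ : ℝ) := lt_of_lt_of_le hlt (Int.le_ceil _)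
      exact_mod_cast h3.le
  have hfin : IntegrableOn f
      (⋃ n ∈ Finset.Icc m M, Ioc (a₀ + n • T) (a₀ + (n + 1) • T)) volume :=
    integrableOn_finset_iUnion.2 fun n _ => cell n
  rw [intervalIntegrable_iff, uIoc_of_le hab]
  exact hfin.mono_set cover

lemma periodic_aesm {f : ℝ → ℂ} {T : ℝ} (hT : 0 < T)
    (hper : Function.Periodic f T) {a₀ : ℝ}
    (hint : IntervalIntegrable f volume a₀ (a₀ + T)) :
    AEStronglyMeasurable f (volume : Measure ℝ) := by
  have key := periodic_intervalIntegrable_all hT hper hint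
  have hu : (⋃ n : ℤ, Ioc ((0:ℝ) + n • T) (0 + (n + 1) • T)) = univ :=
    iUnion_Ioc_add_zsmul hT 0
  rw [← Measure.restrict_univ (μ := (volume : Measure ℝ)), ← hu,
    aestronglyMeasurable_iUnion_iff]
  intro n
  exact (key _ _).1.aestronglyMeasurable

/-- `‖f∗g‖_𝕋 ≤ ‖f‖_𝕋 ‖g‖₁` for `2π`-periodic functions
integrable on `[−π, π]`. -/
theorem alexiewicz_norm_convolution_le (f g : ℝ → ℂ)
    (hfper : Function.Periodic f (2 * π))
    (hfint : IntervalIntegrable f volume (-π) π)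
    (hgper : Function.Periodic g (2 * π))
    (hgint : IntervalIntegrable g volume (-π) π) :
    alexNorm (torusConv f g) ≤ alexNorm f * ∫ t in (-π)..π, ‖g t‖ := by
  have hπ := Real.pi_pos
  have hT : (0:ℝ) < 2 * π := by linarith
  have hππ : (-π : ℝ) ≤ π := by linarith
  have hfint' : IntervalIntegrable f volume (-π) (-π + 2 * π) := by
    have h : -π + 2 * π = π := by ring
    rw [h]; exact hfint
  have fInt : ∀ a b : ℝ, IntervalIntegrable f volume a b :=
    periodic_intervalIntegrable_all hT hfper hfint'
  have fAesm : AEStronglyMeasurable f (volume : Measure ℝ) :=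
    periodic_aesm hT hfper hfint'
  set C : ℝ := ∫ t in (-π)..π, ‖g t‖ with hC
  have hCnn : 0 ≤ C :=
    intervalIntegral.integral_nonneg hππ fun t _ => norm_nonneg _
  set S : Set ℝ := {r : ℝ | ∃ α β : ℝ, α ≤ β ∧ β ≤ α + 2 * π ∧
      r = ‖∫ t in α..β, f t‖} with hS
  -- boundedness of S
  have hSbdd : BddAbove S := by
    refine ⟨∫ y in (-π)..(3 * π), ‖f y‖, ?_⟩
    rintro r ⟨α, β, hab, hba, rfl⟩
    set k : ℤ := ⌊(α + π) / (2 * π)⌋ with hk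
    have hk1 : (k : ℝ) ≤ (α + π) / (2 * π) := Int.floor_le _
    have hk2 : (α + π) / (2 * π) < (k : ℝ) + 1 := Int.lt_floor_add_one _
    have hk1' : (k : ℝ) * (2 * π) ≤ α + π := by
      rw [← le_div_iff₀ hT]; exact hk1
    have hk2' : α + π < ((k : ℝ) + 1) * (2 * π) := by
      rw [← div_lt_iff₀ hT]; exact hk2
    set d : ℝ := (k : ℝ) * (2 * π) with hd
    have hshift : (∫ t in α..β, f t) = ∫ t in (α - d)..(β - d), f t := by
      rw [← intervalIntegral.integral_comp_sub_right f d]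
      refine intervalIntegral.integral_congr fun x _ => ?_
      exact (hfper.sub_int_mul_eq k).symm
    rw [hshift]
    have hle1 : -π ≤ α - d := by simp only [hd]; linarith
    have hle2 : β - d ≤ 3 * π := by simp only [hd]; nlinarith
    calc ‖∫ t in (α - d)..(β - d), f t‖
        ≤ ∫ t in (α - d)..(β - d), ‖f t‖ := by
          exact intervalIntegral.norm_integral_le_integral_norm (by linarith)
      _ ≤ ∫ y in (-π)..(3 * π), ‖f y‖ := by
          refine intervalIntegral.integral_mono_interval hle1 (by linarith) hle2
            (Filter.Eventually.of_forall fun x => norm_nonneg _) ((fInt _ _).norm)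
  have hS0 : (0 : ℝ) ∈ S := ⟨0, 0, le_refl _, by linarith, by simp⟩
  have hAnn : 0 ≤ alexNorm f := le_csSup hSbdd hS0
  -- the main estimate for a fixed interval
  have key : ∀ α β : ℝ, α ≤ β → β ≤ α + 2 * π →
      ‖∫ x in α..β, torusConv f g x‖ ≤ alexNorm f * C := by
    intro α β hab hba
    set μA : Measure ℝ := volume.restrict (Ioc α β) with hμA
    set μB : Measure ℝ := volume.restrict (Ioc (-π) π) with hμB
    set F : ℝ × ℝ → ℂ := fun p => f (p.1 - p.2) * g p.2 with hF
    -- measurability of F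
    have h1 : AEStronglyMeasurable (fun p : ℝ × ℝ => f (p.1 - p.2))
        ((volume : Measure ℝ).prod volume) :=
      (fAesm.comp_fst (ν := volume)).comp_quasiMeasurePreserving
        (measurePreserving_sub_prod volume volume).quasiMeasurePreserving
    have h1' : AEStronglyMeasurable (fun p : ℝ × ℝ => f (p.1 - p.2)) (μA.prod μB) := by
      rw [hμA, hμB, Measure.prod_restrict]
      exact h1.restrict
    have hg1 : AEStronglyMeasurable g μB := by
      have := hgint.1
      exact this.aestronglyMeasurable
    have hFm : AEStronglyMeasurable F (μA.prod μB) := h1'.mul hg1.comp_snd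
    -- translated integrability of f
    have ftrans : ∀ t : ℝ, IntegrableOn (fun x => f (x - t)) (Ioc α β) volume := by
      intro t
      have h := (fInt (α - t) (β - t)).comp_sub_right t
      have he1 : α - t + t = α := by ring
      have he2 : β - t + t = β := by ring
      rw [he1, he2] at h
      exact h.1
    set Mf : ℝ := ∫ y in (α - π)..(α + 3 * π), ‖f y‖ with hMf
    have ftrans_bound : ∀ t ∈ Ioc (-π) π,
        (∫ x, ‖f (x - t)‖ ∂μA) ≤ Mf := by
      intro t ht
      have h1 : (∫ x, ‖f (x - t)‖ ∂μA) = ∫ x in α..β, ‖f (x - t)‖ := by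
        rw [intervalIntegral.integral_of_le hab]
      rw [h1, intervalIntegral.integral_comp_sub_right (fun y => ‖f y‖) t]
      refine intervalIntegral.integral_mono_interval (by linarith [ht.2])
        (by linarith) (by linarith [ht.1])
        (Filter.Eventually.of_forall fun x => norm_nonneg _) ((fInt _ _).norm)
    -- integrability of F
    have hFi : Integrable F (μA.prod μB) := by
      refine (integrable_prod_iff' hFm).2 ⟨?_, ?_⟩
      · refine Filter.Eventually.of_forall fun t => ?_
        exact ((ftrans t).mul_const (g t))
      · have haesm : AEStronglyMeasurable (fun t => ∫ x, ‖F (x, t)‖ ∂μA) μB :=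
          hFm.norm.prod_swap.integral_prod_right'
        refine Integrable.mono' (hgint.norm.1.mul_const Mf) haesm
          ((ae_restrict_iff' measurableSet_Ioc).2 (Filter.Eventually.of_forall ?_))
        intro t ht
        have hnn : 0 ≤ ∫ x, ‖F (x, t)‖ ∂μA := integral_nonneg fun x => norm_nonneg _
        rw [Real.norm_of_nonneg hnn]
        have hcalc : (∫ x, ‖F (x, t)‖ ∂μA) = (∫ x, ‖f (x - t)‖ ∂μA) * ‖g t‖ := by
          simp only [hF, norm_mul]
          exact integral_mul_const _ _
        rw [hcalc]
        have := ftrans_bound t ht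
        have hgn : 0 ≤ ‖g t‖ := norm_nonneg _
        nlinarith [ftrans_bound t ht]
    -- rewrite the outer integral as a double integral and swap
    have hrw : (∫ x in α..β, torusConv f g x) = ∫ x, (∫ t, F (x, t) ∂μB) ∂μA := by
      rw [intervalIntegral.integral_of_le hab]
      refine setIntegral_congr_fun measurableSet_Ioc fun x _ => ?_
      rw [torusConv, intervalIntegral.integral_of_le hππ]
    have hswap : (∫ x, (∫ t, F (x, t) ∂μB) ∂μA) = ∫ t, (∫ x, F (x, t) ∂μA) ∂μB :=
      integral_integral_swap hFi
    rw [hrw, hswap]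
    -- bound
    have hCrw : C = ∫ t, ‖g t‖ ∂μB := by
      rw [hC, intervalIntegral.integral_of_le hππ]
    have hbound : ∀ t ∈ Ioc (-π) π, ‖∫ x, F (x, t) ∂μA‖ ≤ ‖g t‖ * alexNorm f := by
      intro t ht
      have hpt : (∫ x, F (x, t) ∂μA) = (∫ x, f (x - t) ∂μA) * g t := by
        simp only [hF]
        exact integral_mul_const _ _
      rw [hpt, norm_mul, mul_comm]
      refine mul_le_mul_of_nonneg_left ?_ (norm_nonneg _)
      have hIv : (∫ x, f (x - t) ∂μA) = ∫ y in (α - t)..(β - t), f y := by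
        rw [hμA, ← intervalIntegral.integral_of_le hab,
          intervalIntegral.integral_comp_sub_right f t]
      rw [hIv]
      have hmem : ‖∫ y in (α - t)..(β - t), f y‖ ∈ S := by
        refine ⟨α - t, β - t, by linarith, by linarith, ?_⟩
        rfl
      exact le_csSup hSbdd hmem
    calc ‖∫ t, (∫ x, F (x, t) ∂μA) ∂μB‖
        ≤ ∫ t, ‖g t‖ * alexNorm f ∂μB := by
          exact norm_integral_le_of_norm_le (hgint.norm.1.mul_const _)
            ((ae_restrict_iff' measurableSet_Ioc).2 (Filter.Eventually.of_forall hbound))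
      _ = alexNorm f * C := by
          rw [hCrw, integral_mul_const, mul_comm]
  -- conclude
  refine Real.sSup_le ?_ (mul_nonneg hAnn hCnn)
  rintro r ⟨α, β, hab, hba, rfl⟩
  exact key α β hab hba
end
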